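/- Let G_A be a flow graph with flat dominator tree rooted at z, containing distinguished vertices α* and β* with in-edges only from z, and equipped with divergent spanning trees B_A, R_A satisfying the invariants of AuxiliaryLowHigh. Then algorithm AuxiliaryLowHigh computes a low-high order ζ of G_A such that α* is first and β* is last among the non-root vertices, i.e., α* <_ζ v <_ζ β* for all v ∈ V_A \ {z, α*, β*}. -/

import Mathlib

open scoped Classical

namespace Dominators

variable {V : Type*}

/-- A walk in a digraph `E` from `u` to `w`, recorded as the list of its vertices. -/
inductive Walk (E : V → V → Prop) : V → V → List V → Prop
  | nil (v : V) : Walk E v v [v]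
  | cons {u v w : V} {p : List V} (h : E u v) (hw : Walk E v w p) : Walk E u w (u :: p)

/-- `v` is reachable from `s` in the flow graph `(E, s)`. -/
def Reachable (E : V → V → Prop) (s v : V) : Prop := ∃ p, Walk E s v p

/-- `v` dominates `w` in the flow graph `(E, s)`: every walk from `s` to `w` contains `v`.
In the dominator tree `D`, `v` is an ancestor of `w` iff `v` dominates `w`. -/
def Dom (E : V → V → Prop) (s v w : V) : Prop := ∀ p, Walk E s w p → v ∈ p

/-- `v` is the immediate dominator of `w` (the parent of `w` in the dominator tree):
a proper dominator of `w` that is dominated by every proper dominator of `w`. -/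
def IsIdom (E : V → V → Prop) (s v w : V) : Prop :=
  v ≠ w ∧ Dom E s v w ∧ ∀ u, u ≠ w → Dom E s u w → Dom E s u v

/-- `z` is the nearest common ancestor of `x` and `y` in the dominator tree of `(E, s)`. -/
def IsNca (E : V → V → Prop) (s z x y : V) : Prop :=
  Dom E s z x ∧ Dom E s z y ∧ ∀ u, Dom E s u x → Dom E s u y → Dom E s u z

/-- The graph obtained from `E` by inserting the edge `(x, y)`. -/
def Ins (E : V → V → Prop) (x y : V) : V → V → Prop := fun a b => E a b ∨ (a = x ∧ b = y)

/-- `v` is affected by the insertion of edge `(x, y)`: its immediate dominator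
(parent in the dominator tree) changes. -/
def Affected (E : V → V → Prop) (s x y v : V) : Prop :=
  ∃ a b, IsIdom E s a v ∧ IsIdom (Ins E x y) s b v ∧ a ≠ b

/-- `depth` is a depth function for the dominator tree of `(E, s)`. -/
def IsDepth (E : V → V → Prop) (s : V) (depth : V → ℕ) : Prop :=
  depth s = 0 ∧ ∀ v u, Reachable E s v → v ≠ s → IsIdom E s u v → depth v = depth u + 1

/-- `δ` is a preorder of the dominator tree of `(E, s)`: it is injective on reachable
vertices, every vertex precedes (or equals) its descendants, and the descendants of every
vertex are consecutive. -/
def IsPreorderOfD (E : V → V → Prop) (s : V) (δ : V → ℕ) : Prop :=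
  (∀ u v, Reachable E s u → Reachable E s v → u ≠ v → δ u ≠ δ v) ∧
  (∀ v u, Reachable E s u → Dom E s v u → δ v ≤ δ u) ∧
  (∀ v a b, Reachable E s b → Dom E s v a → δ v ≤ δ b → δ b ≤ δ a → Dom E s v b)

/-- `δ` is a low-high order for the vertex `v` in `(E, s)`: either the edge from the
parent `d(v)` of `v` in the dominator tree is in `E`, or `v` has two entering edges
`(u, v)` and `(w, v)` with `u`, `w` reachable, `u <_δ v <_δ w`, and `w` not a
descendant of `v` in the dominator tree. -/
def LowHighFor (E : V → V → Prop) (s : V) (δ : V → ℕ) (v : V) : Prop :=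
  (∃ q, IsIdom E s q v ∧ E q v) ∨
  ∃ u w, E u v ∧ E w v ∧ Reachable E s u ∧ Reachable E s w ∧
    δ u < δ v ∧ δ v < δ w ∧ ¬ Dom E s v w

/-- `δ` is a low-high order of the flow graph `(E, s)`. -/
def IsLowHigh (E : V → V → Prop) (s : V) (δ : V → ℕ) : Prop :=
  IsPreorderOfD E s δ ∧ ∀ v, Reachable E s v → v ≠ s → LowHighFor E s δ v

/-- The edge relation of the spanning tree with parent function `par`, rooted at `s`,
on the vertices reachable in `(E, s)`. -/
def TreeRel (E : V → V → Prop) (s : V) (par : V → V) : V → V → Prop :=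
  fun a b => Reachable E s b ∧ b ≠ s ∧ par b = a

/-- `par` is (the parent function of) a spanning tree of the flow graph `(E, s)`. -/
def IsSpanningTree (E : V → V → Prop) (s : V) (par : V → V) : Prop :=
  (∀ v, Reachable E s v → v ≠ s → E (par v) v) ∧
  (∀ v, Reachable E s v → ∃ p, Walk (TreeRel E s par) s v p)

/-- The spanning trees with parent functions `b` and `r` are divergent: for every
reachable `v`, the tree paths from `s` to `v` share only the dominators of `v`. -/
def Divergent (E : V → V → Prop) (s : V) (b r : V → V) : Prop :=
  ∀ v p q, Reachable E s v → Walk (TreeRel E s b) s v p → Walk (TreeRel E s r) s v q →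
    ∀ u, u ∈ p → u ∈ q → Dom E s u v

/-- The invariants of algorithm `AuxiliaryLowHigh` for the flow graph `(EA, z)` with
spanning trees given by parent functions `b` and `r`:
(i) the dominator tree of `(EA, z)` is flat;
(ii) `b` and `r` are divergent spanning trees of `(EA, z)` rooted at `z`;
(iii) for every vertex `v ≠ z`, either `b v = r v = z` or `b v`, `r v`, `z` are
pairwise distinct. -/
def AuxInv (EA : V → V → Prop) (z : V) (b r : V → V) : Prop :=
  (∀ v, Reachable EA z v → v ≠ z → ∀ u, Dom EA z u v → u = z ∨ u = v) ∧
  (IsSpanningTree EA z b ∧ IsSpanningTree EA z r ∧ Divergent EA z b r) ∧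
  (∀ v, Reachable EA z v → v ≠ z →
    (b v = z ∧ r v = z) ∨ (b v ≠ z ∧ r v ≠ z ∧ b v ≠ r v))

section Aux

variable [DecidableEq V]
set_option linter.unusedSectionVars false

/-! ### Parent chains -/

/-- The chain of tree-parents from `u` up to the root `z`. -/
inductive UpChain (f : V → V) (z : V) : V → List V → Prop
  | root : UpChain f z z [z]
  | step {v : V} {l : List V} (hv : v ≠ z) (h : UpChain f z (f v) l) : UpChain f z v (v :: l)

variable {z : V}

lemma UpChain.head {f : V → V} {u : V} {l : List V} (h : UpChain f z u l) :
    ∃ t, l = u :: t := by cases h <;> exact ⟨_, rfl⟩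

lemma UpChain.self_mem {f : V → V} {u : V} {l : List V} (h : UpChain f z u l) : u ∈ l := by
  obtain ⟨t, rfl⟩ := h.head; simp

lemma UpChain.unique {f : V → V} {u : V} {l₁ l₂ : List V}
    (h₁ : UpChain f z u l₁) (h₂ : UpChain f z u l₂) : l₁ = l₂ := by
  induction h₁ generalizing l₂ with
  | root =>
    cases h₂ with
    | root => rfl
    | step hv h => exact absurd rfl hv
  | step hv h ih =>
    cases h₂ with
    | root => exact absurd rfl hv
    | step hv' h' => rw [ih h']

lemma UpChain.exists_of_mem {f : V → V} {u x : V} {l : List V} (h : UpChain f z u l)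
    (hx : x ∈ l) : ∃ m, UpChain f z x m ∧ m.length ≤ l.length := by
  induction h with
  | root =>
    simp only [List.mem_singleton] at hx
    subst hx; exact ⟨[x], UpChain.root, le_rfl⟩
  | step hv h ih =>
    rcases List.mem_cons.1 hx with rfl | hx'
    · exact ⟨_, UpChain.step hv h, le_rfl⟩
    · obtain ⟨m, hm, hlen⟩ := ih hx'
      exact ⟨m, hm, hlen.trans (Nat.le_succ _)⟩

lemma UpChain.nodup {f : V → V} {u : V} {l : List V} (h : UpChain f z u l) : l.Nodup := by
  induction h with
  | root => simp
  | step hv h ih =>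
    refine List.nodup_cons.2 ⟨?_, ih⟩
    intro hmem
    rename_i v l'
    obtain ⟨m, hm, hlen⟩ := h.exists_of_mem hmem
    have heq := hm.unique (UpChain.step hv h)
    subst heq
    simp at hlen

lemma UpChain.ne_self {f : V → V} {u : V} {l : List V} (h : UpChain f z u l) (hu : u ≠ z) :
    f u ≠ u := by
  cases h with
  | root => exact absurd rfl hu
  | step hv h1 =>
    intro heq
    have hnd := (UpChain.step hv h1).nodup
    have hm := h1.self_mem
    rw [heq] at hm
    exact (List.nodup_cons.1 hnd).1 hm

lemma UpChain.parent_mem {f : V → V} {u : V} {l : List V} (h : UpChain f z u l)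
    (hu : u ≠ z) : f u ∈ l := by
  cases h with
  | root => exact absurd rfl hu
  | step hv h1 => exact List.mem_cons.2 (Or.inr h1.self_mem)

lemma UpChain.grand_mem {f : V → V} {u : V} {l : List V} (h : UpChain f z u l)
    (hu : u ≠ z) (hfu : f u ≠ z) : f (f u) ∈ l ∧ u ≠ f (f u) := by
  cases h with
  | root => exact absurd rfl hu
  | step hv h1 =>
    cases h1 with
    | root => exact absurd rfl hfu
    | step hv2 h2 =>
      rename_i l₂
      have hmem : f (f u) ∈ l₂ := h2.self_mem
      have hnd := (UpChain.step hv (UpChain.step hv2 h2)).nodup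
      refine ⟨by simp [hmem], ?_⟩
      intro he
      have hm2 : u ∈ f u :: l₂ := by rw [he]; exact List.mem_cons.2 (Or.inr hmem)
      exact (List.nodup_cons.1 hnd).1 hm2

lemma upchain_redirect {f : V → V} {v : V} (hvz : v ≠ z) :
    ∀ (n : ℕ) (l : List V) (u : V), l.length ≤ n → UpChain f z u l → u ≠ v →
      ∃ l', UpChain (fun w => if f w = v then f v else f w) z u l' ∧ ∀ x ∈ l', x ∈ l := by
  intro n
  induction n with
  | zero => intro l u hlen h _; cases h <;> simp at hlen
  | succ n ih =>
    intro l u hlen h huv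
    cases h with
    | root => exact ⟨[z], UpChain.root, by simp⟩
    | step hu h1 =>
      rename_i l₁
      by_cases hfu : f u = v
      · rw [hfu] at h1
        have hfvv : f v ≠ v := h1.ne_self hvz
        cases h1 with
        | root => exact absurd rfl hvz
        | step hv2 h2 =>
          rename_i l₂
          have hlen2 : l₂.length ≤ n := by simp at hlen; omega
          obtain ⟨l', hl', hsub⟩ := ih l₂ (f v) hlen2 h2 hfvv
          refine ⟨u :: l', UpChain.step hu ?_, ?_⟩
          · simpa [hfu] using hl'
          · intro x hx
            rcases List.mem_cons.1 hx with rfl | hx'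
            · simp
            · have := hsub x hx'
              simp [this]
      · have hlen1 : l₁.length ≤ n := by simp at hlen; omega
        obtain ⟨l', hl', hsub⟩ := ih l₁ (f u) hlen1 h1 hfu
        refine ⟨u :: l', UpChain.step hu ?_, ?_⟩
        · simpa [hfu] using hl'
        · intro x hx
          rcases List.mem_cons.1 hx with rfl | hx'
          · simp
          · have := hsub x hx'
            simp [this]

/-! ### Strict betweenness over ℚ -/

/-- `x` lies strictly between `a` and `c`. -/
def Btw (a x c : ℚ) : Prop := (a < x ∧ x < c) ∨ (c < x ∧ x < a)

lemma btw_shift {c e g x : ℚ} (h : Btw c e g) (h2 : ¬ Btw c e x) (hex : e ≠ x) :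
    Btw x e g := by
  rcases h with ⟨h1, h1'⟩ | ⟨h1, h1'⟩
  · have hxe : ¬ e < x := fun hx => h2 (Or.inl ⟨h1, hx⟩)
    exact Or.inl ⟨lt_of_le_of_ne (not_lt.1 hxe) (Ne.symm hex), h1'⟩
  · have hxe : ¬ x < e := fun hx => h2 (Or.inr ⟨hx, h1'⟩)
    exact Or.inr ⟨h1, lt_of_le_of_ne (not_lt.1 hxe) hex⟩

lemma exists_adj_lt (A : Finset ℚ) {c d : ℚ} (hcd : c < d) (hd : d ∈ A) :
    ∃ x, c < x ∧ x < d ∧ ∀ y ∈ A, y ≤ c ∨ x < y := by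
  have hB : (A.filter (fun y => c < y)).Nonempty := ⟨d, by simp [hd, hcd]⟩
  set m := (A.filter (fun y => c < y)).min' hB with hm
  have hcm : c < m := (Finset.mem_filter.1 ((A.filter (fun y => c < y)).min'_mem hB)).2
  have hmd : m ≤ d := Finset.min'_le _ d (by simp [hd, hcd])
  refine ⟨(c + m) / 2, by linarith, by linarith, ?_⟩
  intro y hy
  by_cases h : c < y
  · right
    have : m ≤ y := Finset.min'_le _ y (Finset.mem_filter.2 ⟨hy, h⟩)
    linarith
  · left; linarith

lemma exists_adj (A : Finset ℚ) {c d : ℚ} (hcd : c ≠ d) (hd : d ∈ A) :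
    ∃ x, Btw c x d ∧ ∀ y ∈ A, y ≠ x ∧ ¬ Btw c y x := by
  rcases hcd.lt_or_gt with h | h
  · obtain ⟨x, h1, h2, h3⟩ := exists_adj_lt A h hd
    refine ⟨x, Or.inl ⟨h1, h2⟩, fun y hy => ?_⟩
    rcases h3 y hy with h4 | h4
    · exact ⟨by intro he; subst he; linarith, by rintro (⟨a, b⟩ | ⟨a, b⟩) <;> linarith⟩
    · exact ⟨by intro he; subst he; linarith, by rintro (⟨a, b⟩ | ⟨a, b⟩) <;> linarith⟩
  · obtain ⟨x, h1, h2, h3⟩ := exists_adj_lt (A.image (fun t => -t)) (show -c < -d by linarith)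
      (Finset.mem_image.2 ⟨d, hd, rfl⟩)
    refine ⟨-x, Or.inr ⟨by linarith, by linarith⟩, fun y hy => ?_⟩
    rcases h3 (-y) (Finset.mem_image.2 ⟨y, hy, rfl⟩) with h4 | h4
    · exact ⟨by intro he; subst he; simp at h4 ⊢; linarith,
        by rintro (⟨a, b⟩ | ⟨a, b⟩) <;> linarith⟩
    · exact ⟨by intro he; subst he; linarith, by rintro (⟨a, b⟩ | ⟨a, b⟩) <;> linarith⟩

/-! ### Invariants and conclusion of the abstract algorithm -/

structure Hyp (S : Finset V) (z α β : V) (b r : V → V) : Prop where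
  hz : z ∉ S
  hα : α ∈ S
  hβ : β ∈ S
  hαβ : α ≠ β
  hbα : b α = z
  hrα : r α = z
  hbβ : b β = z
  hrβ : r β = z
  hclb : ∀ u ∈ S, b u = z ∨ b u ∈ S
  hclr : ∀ u ∈ S, r u = z ∨ r u ∈ S
  hpar : ∀ u ∈ S, (b u = z ∧ r u = z) ∨ (b u ≠ z ∧ r u ≠ z ∧ b u ≠ r u)
  hchb : ∀ u ∈ S, ∃ l, UpChain b z u l
  hchr : ∀ u ∈ S, ∃ l, UpChain r z u l
  hdisj : ∀ u ∈ S, ∀ p q, UpChain b z u p → UpChain r z u q →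
    ∀ x, x ∈ p → x ∈ q → x = u ∨ x = z

def Concl (S : Finset V) (z α β : V) (b r : V → V) (ζ : V → ℚ) : Prop :=
  Set.InjOn ζ S ∧
  (∀ u ∈ S, b u ≠ z → Btw (ζ (b u)) (ζ u) (ζ (r u))) ∧
  (∀ u ∈ S, u ≠ α → u ≠ β → ζ α < ζ u ∧ ζ u < ζ β) ∧
  (∀ u ∈ S, ζ α ≤ ζ u ∧ ζ u ≤ ζ β)

lemma Hyp.swap {S : Finset V} {z α β : V} {b r : V → V} (H : Hyp S z α β b r) :
    Hyp S z α β r b where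
  hz := H.hz
  hα := H.hα
  hβ := H.hβ
  hαβ := H.hαβ
  hbα := H.hrα
  hrα := H.hbα
  hbβ := H.hrβ
  hrβ := H.hbβ
  hclb := H.hclr
  hclr := H.hclb
  hpar := fun u hu => (H.hpar u hu).imp (fun h => ⟨h.2, h.1⟩)
    (fun h => ⟨h.2.1, h.1, h.2.2.symm⟩)
  hchb := H.hchr
  hchr := H.hchb
  hdisj := fun u hu p q hp hq x hxp hxq => H.hdisj u hu q p hq hp x hxq hxp

lemma Concl.swap {S : Finset V} {z α β : V} {b r : V → V} {ζ : V → ℚ}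
    (H : Hyp S z α β b r) (C : Concl S z α β r b ζ) : Concl S z α β b r ζ := by
  refine ⟨C.1, ?_, C.2.2.1, C.2.2.2⟩
  intro u hu hbu
  have hru : r u ≠ z := ((H.hpar u hu).resolve_left (fun h => hbu h.1)).2.1
  exact (C.2.1 u hu hru).symm

lemma base_case {S : Finset V} {z α β : V} {b r : V → V} (H : Hyp S z α β b r)
    (hb : ∀ u ∈ S, b u = z) : ∃ ζ : V → ℚ, Concl S z α β b r ζ := by
  set ζ : V → ℚ := fun u => if u = α then 0 else if u = β then ((S.card : ℚ) + 1)
    else ((S.toList.idxOf u : ℚ) + 1) with hζ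
  have vα : ζ α = 0 := by simp [hζ]
  have vβ : ζ β = (S.card : ℚ) + 1 := by simp [hζ, Ne.symm H.hαβ]
  have vo : ∀ u, u ≠ α → u ≠ β → ζ u = (S.toList.idxOf u : ℚ) + 1 := by
    intro u h1 h2; simp [hζ, h1, h2]
  have key : ∀ u ∈ S, u ≠ α → u ≠ β →
      (1 : ℚ) ≤ ζ u ∧ ζ u ≤ S.card := by
    intro u hu h1 h2
    rw [vo u h1 h2]
    have hlt : S.toList.idxOf u < S.toList.length := List.idxOf_lt_length_iff.2 (by
      simpa using hu)
    have hlen : S.toList.length = S.card := Finset.length_toList S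
    constructor
    · have : (0 : ℚ) ≤ (S.toList.idxOf u : ℚ) := by positivity
      linarith
    · have h2' : S.toList.idxOf u + 1 ≤ S.card := by omega
      calc ((S.toList.idxOf u : ℚ) + 1) = ((S.toList.idxOf u + 1 : ℕ) : ℚ) := by
            push_cast; ring
        _ ≤ (S.card : ℚ) := by exact_mod_cast h2'
  have hcard_pos : (0 : ℚ) < (S.card : ℚ) + 1 := by positivity
  refine ⟨ζ, ?_, ?_, ?_, ?_⟩
  · intro u₁ h₁ u₂ h₂ heq
    by_cases e1 : u₁ = α <;> by_cases e2 : u₂ = α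
    · rw [e1, e2]
    all_goals try subst e1
    all_goals try subst e2
    · by_cases e3 : u₂ = β
      · subst e3; rw [vα, vβ] at heq; exfalso; linarith
      · rw [vα, vo u₂ e2 e3] at heq
        have := (key u₂ h₂ e2 e3).1
        rw [vo u₂ e2 e3] at this; exfalso; linarith
    · by_cases e3 : u₁ = β
      · subst e3; rw [vα, vβ] at heq; exfalso; linarith
      · rw [vα, vo u₁ e1 e3] at heq
        have := (key u₁ h₁ e1 e3).1
        rw [vo u₁ e1 e3] at this; exfalso; linarith
    · by_cases e3 : u₁ = β <;> by_cases e4 : u₂ = β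
      · rw [e3, e4]
      all_goals try subst e3
      all_goals try subst e4
      · have := (key u₂ h₂ e2 e4).2
        rw [vβ, vo u₂ e2 e4] at heq
        rw [vo u₂ e2 e4] at this; exfalso; linarith
      · have := (key u₁ h₁ e1 e3).2
        rw [vβ, vo u₁ e1 e3] at heq
        rw [vo u₁ e1 e3] at this; exfalso; linarith
      · rw [vo u₁ e1 e3, vo u₂ e2 e4] at heq
        have hidx : S.toList.idxOf u₁ = S.toList.idxOf u₂ := by
          have := add_right_cancel heq
          exact_mod_cast this
        have hmem1 : u₁ ∈ S.toList := by simpa using h₁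
        have hmem2 : u₂ ∈ S.toList := by simpa using h₂
        exact (List.idxOf_inj (y := u₂) hmem1).1 hidx
  · intro u hu hbu; exact absurd (hb u hu) hbu
  · intro u hu h1 h2
    obtain ⟨k1, k2⟩ := key u hu h1 h2
    rw [vα, vβ]
    exact ⟨by linarith, by linarith⟩
  · intro u hu
    rw [vα, vβ]
    by_cases e1 : u = α
    · subst e1; rw [vα]; constructor <;> linarith
    by_cases e2 : u = β
    · subst e2; rw [vβ]; constructor <;> linarith
    obtain ⟨k1, k2⟩ := key u hu e1 e2
    exact ⟨by linarith, by linarith⟩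


lemma exists_light {S : Finset V} {z : V} {b r : V → V}
    (hz : z ∉ S)
    (hclb : ∀ u ∈ S, b u = z ∨ b u ∈ S)
    (hclr : ∀ u ∈ S, r u = z ∨ r u ∈ S)
    (hiff : ∀ u ∈ S, (b u = z ↔ r u = z))
    (hchb : ∀ u ∈ S, ∃ l, UpChain b z u l)
    (hne : ∃ v ∈ S, b v ≠ z) :
    ∃ v ∈ S, b v ≠ z ∧ ((S.filter (fun w => b w = v)) = ∅ ∨ (S.filter (fun w => r w = v)) = ∅) := by
  by_contra hcon
  push_neg at hcon
  set T := S.filter (fun w => b w ≠ z) with hT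
  have hTsub : T ⊆ S := Finset.filter_subset _ _
  have hTb : ∀ w ∈ T, b w ∈ S := fun w hw =>
    (hclb w (hTsub hw)).resolve_left (Finset.mem_filter.1 hw).2
  have h1 : T.card = ∑ v ∈ S, (T.filter (fun w => b w = v)).card :=
    Finset.card_eq_sum_card_fiberwise hTb
  have hfib_b : ∀ v ∈ S, T.filter (fun w => b w = v) = S.filter (fun w => b w = v) := by
    intro v hv
    have hvz : v ≠ z := fun h => hz (h ▸ hv)
    have hcg : ∀ w ∈ S, ((b w ≠ z ∧ b w = v) ↔ b w = v) :=
      fun w hw => ⟨And.right, fun h => ⟨h ▸ hvz, h⟩⟩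
    rw [hT, Finset.filter_filter, Finset.filter_congr hcg]
  have h1' : T.card = ∑ v ∈ S, (S.filter (fun w => b w = v)).card := by
    rw [h1]; exact Finset.sum_congr rfl (fun v hv => by rw [hfib_b v hv])
  have hTr : T = S.filter (fun w => r w ≠ z) := by
    ext w
    simp only [hT, Finset.mem_filter]
    exact ⟨fun ⟨h, h2⟩ => ⟨h, fun hr => h2 ((hiff w h).2 hr)⟩,
      fun ⟨h, h2⟩ => ⟨h, fun hb => h2 ((hiff w h).1 hb)⟩⟩
  have hTr' : ∀ w ∈ T, r w ∈ S := by
    intro w hw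
    rw [hTr] at hw
    exact (hclr w (Finset.mem_filter.1 hw).1).resolve_left (Finset.mem_filter.1 hw).2
  have h2 : T.card = ∑ v ∈ S, (T.filter (fun w => r w = v)).card :=
    Finset.card_eq_sum_card_fiberwise hTr'
  have hfib_r : ∀ v ∈ S, T.filter (fun w => r w = v) = S.filter (fun w => r w = v) := by
    intro v hv
    have hvz : v ≠ z := fun h => hz (h ▸ hv)
    have hcg : ∀ w ∈ S, ((r w ≠ z ∧ r w = v) ↔ r w = v) :=
      fun w hw => ⟨And.right, fun h => ⟨h ▸ hvz, h⟩⟩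
    rw [hTr, Finset.filter_filter, Finset.filter_congr hcg]
  have h2' : T.card = ∑ v ∈ S, (S.filter (fun w => r w = v)).card := by
    rw [h2]; exact Finset.sum_congr rfl (fun v hv => by rw [hfib_r v hv])
  set C : V → ℕ := fun v => (S.filter (fun w => b w = v)).card + (S.filter (fun w => r w = v)).card
    with hC
  have htotal : ∑ v ∈ S, C v = 2 * T.card := by
    simp only [hC]
    rw [Finset.sum_add_distrib, ← h1', ← h2']
    ring
  have hlow : ∀ v ∈ T, 2 ≤ C v := by
    intro v hv
    obtain ⟨hvS, hbv⟩ := Finset.mem_filter.1 hv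
    obtain ⟨hb1, hb2⟩ := hcon v hvS hbv
    have c1 : 0 < (S.filter (fun w => b w = v)).card :=
      Finset.card_pos.2 hb1
    have c2 : 0 < (S.filter (fun w => r w = v)).card :=
      Finset.card_pos.2 hb2
    simp only [hC]; omega
  have hsplit : ∑ v ∈ T, C v + ∑ v ∈ S.filter (fun w => ¬ b w ≠ z), C v = ∑ v ∈ S, C v := by
    rw [hT]; exact Finset.sum_filter_add_sum_filter_not S _ C
  have hTsum : 2 * T.card ≤ ∑ v ∈ T, C v := by
    calc 2 * T.card = ∑ _v ∈ T, 2 := by rw [Finset.sum_const, smul_eq_mul]; ring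
      _ ≤ ∑ v ∈ T, C v := Finset.sum_le_sum hlow
  have hzero : ∀ v ∈ S.filter (fun w => ¬ b w ≠ z), C v = 0 := by
    have : ∑ v ∈ S.filter (fun w => ¬ b w ≠ z), C v = 0 := by omega
    intro v hv
    exact (Finset.sum_eq_zero_iff.1 this) v hv
  have hTclosed : ∀ w ∈ T, b w ∈ T := by
    intro w hw
    have hbwS : b w ∈ S := hTb w hw
    by_contra hbw
    have : b w ∈ S.filter (fun w => ¬ b w ≠ z) := by
      rw [hT] at hbw
      exact Finset.mem_filter.2 ⟨hbwS, fun h => hbw (Finset.mem_filter.2 ⟨hbwS, h⟩)⟩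
    have hC0 := hzero _ this
    have : w ∈ S.filter (fun w' => b w' = b w) := Finset.mem_filter.2 ⟨hTsub hw, rfl⟩
    have : 0 < (S.filter (fun w' => b w' = b w)).card := Finset.card_pos.2 ⟨w, this⟩
    simp only [hC] at hC0; omega
  obtain ⟨v₀, hv₀S, hbv₀⟩ := hne
  have hv₀T : v₀ ∈ T := Finset.mem_filter.2 ⟨hv₀S, hbv₀⟩
  obtain ⟨l, hl⟩ := hchb v₀ hv₀S
  have key : ∀ (l : List V) (u : V), UpChain b z u l → u ∉ T := by
    intro l u h
    induction h with
    | root => intro hzT; exact hz (hTsub hzT)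
    | step hv h ih => intro hu; exact ih (hTclosed _ hu)
  exact key l v₀ hl hv₀T


lemma hyp_step {S : Finset V} {z α β : V} {b r : V → V} (H : Hyp S z α β b r)
    {v : V} (hv : v ∈ S) (hbv : b v ≠ z) :
    Hyp (S.erase v) z α β (fun u => if b u = v then b v else b u)
      (fun u => if r u = v then r v else r u) := by
  have hvz : v ≠ z := fun h => H.hz (h ▸ hv)
  have hrest := (H.hpar v hv).resolve_left (fun h => hbv h.1)
  have hrv : r v ≠ z := hrest.2.1
  have hαv : α ≠ v := fun h => hbv (h ▸ H.hbα)
  have hβv : β ≠ v := fun h => hbv (h ▸ H.hbβ)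
  obtain ⟨lbv, hlbv⟩ := H.hchb v hv
  obtain ⟨lrv, hlrv⟩ := H.hchr v hv
  have hbvv : b v ≠ v := hlbv.ne_self hvz
  have hrvv : r v ≠ v := hlrv.ne_self hvz
  have hbvS : b v ∈ S := (H.hclb v hv).resolve_left hbv
  have hrvS : r v ∈ S := (H.hclr v hv).resolve_left hrv
  refine ⟨fun h => H.hz (Finset.mem_of_mem_erase h),
    Finset.mem_erase.2 ⟨hαv, H.hα⟩, Finset.mem_erase.2 ⟨hβv, H.hβ⟩, H.hαβ,
    ?_, ?_, ?_, ?_, ?_, ?_, ?_, ?_, ?_, ?_⟩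
  · simp [H.hbα, Ne.symm hvz]
  · simp [H.hrα, Ne.symm hvz]
  · simp [H.hbβ, Ne.symm hvz]
  · simp [H.hrβ, Ne.symm hvz]
  · -- hclb
    intro u hu
    obtain ⟨huv, huS⟩ := Finset.mem_erase.1 hu
    by_cases h : b u = v
    · rw [if_pos h]; right; exact Finset.mem_erase.2 ⟨hbvv, hbvS⟩
    · rw [if_neg h]
      rcases H.hclb u huS with h1 | h1
      · exact Or.inl h1
      · exact Or.inr (Finset.mem_erase.2 ⟨h, h1⟩)
  · -- hclr
    intro u hu
    obtain ⟨huv, huS⟩ := Finset.mem_erase.1 hu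
    by_cases h : r u = v
    · rw [if_pos h]; right; exact Finset.mem_erase.2 ⟨hrvv, hrvS⟩
    · rw [if_neg h]
      rcases H.hclr u huS with h1 | h1
      · exact Or.inl h1
      · exact Or.inr (Finset.mem_erase.2 ⟨h, h1⟩)
  · -- hpar
    intro u hu
    obtain ⟨huv, huS⟩ := Finset.mem_erase.1 hu
    have huz : u ≠ z := fun h => H.hz (h ▸ huS)
    rcases H.hpar u huS with ⟨h1, h2⟩ | ⟨h1, h2, h3⟩
    · left
      have hbne : b u ≠ v := fun he => hvz (he.symm.trans h1)
      have hrne : r u ≠ v := fun he => hvz (he.symm.trans h2)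
      rw [if_neg hbne, if_neg hrne]
      exact ⟨h1, h2⟩
    · right
      by_cases hb : b u = v
      · have hrne : r u ≠ v := fun hr => h3 (hb.trans hr.symm)
        rw [if_pos hb, if_neg hrne]
        refine ⟨hbv, h2, ?_⟩
        -- b v ≠ r u, via divergence
        obtain ⟨lp, hlp⟩ := H.hchb u huS
        obtain ⟨lq, hlq⟩ := H.hchr u huS
        obtain ⟨hg1, hg2⟩ := hlp.grand_mem huz h1
        rw [hb] at hg1 hg2
        have hru_mem : r u ∈ lq := hlq.parent_mem huz
        intro he
        rcases H.hdisj u huS lp lq hlp hlq (b v) hg1 (he ▸ hru_mem) with h | h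
        · exact hg2 h.symm
        · exact hbv h
      · by_cases hr : r u = v
        · rw [if_neg hb, if_pos hr]
          refine ⟨h1, hrv, ?_⟩
          -- b u ≠ r v, via divergence
          obtain ⟨lp, hlp⟩ := H.hchb u huS
          obtain ⟨lq, hlq⟩ := H.hchr u huS
          obtain ⟨hg1, hg2⟩ := hlq.grand_mem huz h2
          rw [hr] at hg1 hg2
          have hbu_mem : b u ∈ lp := hlp.parent_mem huz
          intro he
          rcases H.hdisj u huS lp lq hlp hlq (r v) (he ▸ hbu_mem) hg1 with h | h
          · exact hg2 h.symm
          · exact hrv h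
        · rw [if_neg hb, if_neg hr]; exact ⟨h1, h2, h3⟩
  · -- hchb
    intro u hu
    obtain ⟨huv, huS⟩ := Finset.mem_erase.1 hu
    obtain ⟨l, hl⟩ := H.hchb u huS
    obtain ⟨l', hl', _⟩ := upchain_redirect hvz l.length l u le_rfl hl huv
    exact ⟨l', hl'⟩
  · -- hchr
    intro u hu
    obtain ⟨huv, huS⟩ := Finset.mem_erase.1 hu
    obtain ⟨l, hl⟩ := H.hchr u huS
    obtain ⟨l', hl', _⟩ := upchain_redirect hvz l.length l u le_rfl hl huv
    exact ⟨l', hl'⟩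
  · -- hdisj
    intro u hu p q hp hq x hxp hxq
    obtain ⟨huv, huS⟩ := Finset.mem_erase.1 hu
    obtain ⟨lp, hlp⟩ := H.hchb u huS
    obtain ⟨lq, hlq⟩ := H.hchr u huS
    obtain ⟨p₀, hp₀, hsubp⟩ := upchain_redirect hvz lp.length lp u le_rfl hlp huv
    obtain ⟨q₀, hq₀, hsubq⟩ := upchain_redirect hvz lq.length lq u le_rfl hlq huv
    have hpeq := hp.unique hp₀
    have hqeq := hq.unique hq₀
    subst hpeq; subst hqeq
    exact H.hdisj u huS lp lq hlp hlq x (hsubp x hxp) (hsubq x hxq)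

lemma step_lemma {S : Finset V} {z α β : V} {b r : V → V} (H : Hyp S z α β b r)
    {v : V} (hv : v ∈ S) (hbv : b v ≠ z) (hnor : ∀ u ∈ S, r u ≠ v) {ζ' : V → ℚ}
    (hC : Concl (S.erase v) z α β (fun u => if b u = v then b v else b u)
      (fun u => if r u = v then r v else r u) ζ') :
    ∃ ζ : V → ℚ, Concl S z α β b r ζ := by
  have hvz : v ≠ z := fun h => H.hz (h ▸ hv)
  have hrest := (H.hpar v hv).resolve_left (fun h => hbv h.1)
  have hrv : r v ≠ z := hrest.2.1
  have hbrv : b v ≠ r v := hrest.2.2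
  have hαv : α ≠ v := fun h => hbv (h ▸ H.hbα)
  have hβv : β ≠ v := fun h => hbv (h ▸ H.hbβ)
  obtain ⟨lbv, hlbv⟩ := H.hchb v hv
  obtain ⟨lrv, hlrv⟩ := H.hchr v hv
  have hbvv : b v ≠ v := hlbv.ne_self hvz
  have hrvv : r v ≠ v := hlrv.ne_self hvz
  have hbvS : b v ∈ S := (H.hclb v hv).resolve_left hbv
  have hrvS : r v ∈ S := (H.hclr v hv).resolve_left hrv
  have hbvE : b v ∈ S.erase v := Finset.mem_erase.2 ⟨hbvv, hbvS⟩
  have hrvE : r v ∈ S.erase v := Finset.mem_erase.2 ⟨hrvv, hrvS⟩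
  set c := ζ' (b v) with hc
  set d := ζ' (r v) with hd
  have hcd : c ≠ d := fun h => hbrv (hC.1 hbvE hrvE h)
  obtain ⟨x, hxbtw, hxall⟩ := exists_adj ((S.erase v).image ζ') hcd
    (Finset.mem_image_of_mem ζ' hrvE)
  have hxne : ∀ u ∈ S.erase v, ζ' u ≠ x :=
    fun u hu => (hxall _ (Finset.mem_image_of_mem ζ' hu)).1
  have hxnb : ∀ u ∈ S.erase v, ¬ Btw c (ζ' u) x :=
    fun u hu => (hxall _ (Finset.mem_image_of_mem ζ' hu)).2
  set ζ : V → ℚ := fun u => if u = v then x else ζ' u with hζ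
  have vv : ζ v = x := by simp [hζ]
  have vo : ∀ u, u ≠ v → ζ u = ζ' u := by intro u h; simp [hζ, h]
  have hboundc : ζ' α ≤ c ∧ c ≤ ζ' β := hC.2.2.2 (b v) hbvE
  have hboundd : ζ' α ≤ d ∧ d ≤ ζ' β := hC.2.2.2 (r v) hrvE
  refine ⟨ζ, ?_, ?_, ?_, ?_⟩
  · -- InjOn
    intro u₁ h₁ u₂ h₂ heq
    by_cases e1 : u₁ = v <;> by_cases e2 : u₂ = v
    · rw [e1, e2]
    · exfalso
      rw [e1, vv, vo u₂ e2] at heq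
      exact hxne u₂ (Finset.mem_erase.2 ⟨e2, h₂⟩) heq.symm
    · exfalso
      rw [e2, vv, vo u₁ e1] at heq
      exact hxne u₁ (Finset.mem_erase.2 ⟨e1, h₁⟩) heq
    · rw [vo u₁ e1, vo u₂ e2] at heq
      exact hC.1 (Finset.mem_erase.2 ⟨e1, h₁⟩) (Finset.mem_erase.2 ⟨e2, h₂⟩) heq
  · -- betweenness
    intro u hu hbu
    by_cases e : u = v
    · subst e
      rw [vo _ hbvv, vv, vo _ hrvv]
      exact hxbtw
    · have huE : u ∈ S.erase v := Finset.mem_erase.2 ⟨e, hu⟩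
      have hruv : r u ≠ v := hnor u hu
      by_cases hbuv : b u = v
      · have hIH := hC.2.1 u huE (by simpa [hbuv] using hbv)
        simp only [if_pos hbuv, if_neg hruv] at hIH
        have hshift := btw_shift hIH (hxnb u huE) (hxne u huE)
        rw [vo u e, hbuv, vv, vo _ hruv]
        exact hshift
      · have hIH := hC.2.1 u huE (by simpa [hbuv] using hbu)
        simp only [if_neg hbuv, if_neg hruv] at hIH
        rw [vo u e, vo _ hbuv, vo _ hruv]
        exact hIH
  · -- strict bounds
    intro u hu h1 h2
    by_cases e : u = v
    · subst e
      rw [vo α hαv, vv, vo β hβv]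
      rcases hxbtw with ⟨a1, a2⟩ | ⟨a1, a2⟩ <;>
        exact ⟨by cases hboundc; cases hboundd; linarith,
          by cases hboundc; cases hboundd; linarith⟩
    · rw [vo u e, vo α hαv, vo β hβv]
      exact hC.2.2.1 u (Finset.mem_erase.2 ⟨e, hu⟩) h1 h2
  · -- weak bounds
    intro u hu
    by_cases e : u = v
    · subst e
      rw [vo α hαv, vv, vo β hβv]
      rcases hxbtw with ⟨a1, a2⟩ | ⟨a1, a2⟩ <;>
        exact ⟨by cases hboundc; cases hboundd; linarith,
          by cases hboundc; cases hboundd; linarith⟩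
    · rw [vo u e, vo α hαv, vo β hβv]
      exact hC.2.2.2 u (Finset.mem_erase.2 ⟨e, hu⟩)

theorem core {z α β : V} : ∀ (n : ℕ) (S : Finset V) (b r : V → V), S.card ≤ n →
    Hyp S z α β b r → ∃ ζ : V → ℚ, Concl S z α β b r ζ := by
  intro n
  induction n with
  | zero =>
    intro S b r hc H
    exact absurd H.hα (by rw [Finset.card_eq_zero.1 (Nat.le_zero.1 hc)]; simp)
  | succ n ih =>
    intro S b r hc H
    by_cases hbase : ∀ u ∈ S, b u = z
    · exact base_case H hbase
    push_neg at hbase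
    have hiff : ∀ u ∈ S, (b u = z ↔ r u = z) := by
      intro u hu
      rcases H.hpar u hu with ⟨h1, h2⟩ | ⟨h1, h2, _⟩
      · simp [h1, h2]
      · exact ⟨fun h => absurd h h1, fun h => absurd h h2⟩
    obtain ⟨v, hvS, hbv, hlight⟩ := exists_light H.hz H.hclb H.hclr hiff H.hchb hbase
    have hcard' : (S.erase v).card ≤ n := by
      rw [Finset.card_erase_of_mem hvS]
      have : 1 ≤ S.card := Finset.card_pos.2 ⟨v, hvS⟩
      omega
    have hrv : r v ≠ z := ((H.hpar v hvS).resolve_left (fun h => hbv h.1)).2.1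
    rcases hlight with h0 | h0
    · -- no b-children of v in S: use the swapped version
      have hnob : ∀ u ∈ S, b u ≠ v := by
        intro u hu hbu
        have hm : u ∈ S.filter (fun w => b w = v) := Finset.mem_filter.2 ⟨hu, hbu⟩
        rw [h0] at hm
        exact absurd hm (Finset.notMem_empty u)
      have H' := hyp_step H.swap hvS hrv
      obtain ⟨ζ', hC'⟩ := ih (S.erase v) _ _ hcard' H'
      obtain ⟨ζ, hCs⟩ := step_lemma H.swap hvS hrv hnob hC'
      exact ⟨ζ, Concl.swap H hCs⟩
    · -- no r-children of v in S
      have hnor : ∀ u ∈ S, r u ≠ v := by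
        intro u hu hru
        have hm : u ∈ S.filter (fun w => r w = v) := Finset.mem_filter.2 ⟨hu, hru⟩
        rw [h0] at hm
        exact absurd hm (Finset.notMem_empty u)
      have H' := hyp_step H hvS hbv
      obtain ⟨ζ', hC'⟩ := ih (S.erase v) _ _ hcard' H'
      exact step_lemma H hvS hbv hnor hC'

/-! ### Relating walks in the spanning trees to parent chains -/

lemma walk_snoc {E : V → V → Prop} {a c d : V} {p : List V} :
    Walk E a c p → E c d → Walk E a d (p ++ [d]) := by
  intro h
  induction h with
  | nil v => intro he; exact Walk.cons he (Walk.nil d)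
  | cons h hw ihw => intro he; exact Walk.cons h (ihw he)

lemma walk_to_upchain {E : V → V → Prop} {z : V} {par : V → V} {a u : V} {p : List V}
    (h : Walk (TreeRel E z par) a u p) (ha : ∃ l, UpChain par z a l) :
    ∃ l, UpChain par z u l := by
  induction h with
  | nil v => exact ha
  | cons h hw ihw =>
    apply ihw
    obtain ⟨l, hl⟩ := ha
    obtain ⟨_, hne, hpar⟩ := h
    exact ⟨_, UpChain.step hne (hpar ▸ hl)⟩

lemma upchain_to_walk {E : V → V → Prop} {z : V} {par : V → V}
    (hall : ∀ v, Reachable E z v) {u : V} {l : List V} (h : UpChain par z u l) :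
    ∃ p, Walk (TreeRel E z par) z u p ∧ ∀ x, x ∈ p ↔ x ∈ l := by
  induction h with
  | root => exact ⟨[z], Walk.nil z, by simp⟩
  | step hv h ihw =>
    rename_i w l'
    obtain ⟨p, hp, hmem⟩ := ihw
    refine ⟨p ++ [w], walk_snoc hp ⟨hall _, hv, rfl⟩, ?_⟩
    intro x
    simp only [List.mem_append, List.mem_singleton, List.mem_cons, hmem x]
    tauto

end Aux


/-- On a flow graph `(EA, z)` with flat dominator tree, distinguished
vertices `α*`, `β*` whose only entering edge comes from `z`, and divergent spanning
trees `b`, `r` satisfying the invariants of AuxiliaryLowHigh, the algorithm computes a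
low-high order `ζ` of `G_A` in which `α*` is first and `β*` is last among the non-root
vertices. -/
theorem stmt9 [Fintype V] (EA : V → V → Prop) (z α β : V) (b r : V → V)
    (hall : ∀ v : V, Reachable EA z v)
    (hinv : AuxInv EA z b r)
    (hαz : EA z α) (hα : ∀ u, EA u α → u = z)
    (hβz : EA z β) (hβ : ∀ u, EA u β → u = z)
    (hαβ : α ≠ β) (hαz' : α ≠ z) (hβz' : β ≠ z) :
    ∃ ζ : V → ℕ,
      (∀ u v : V, u ≠ v → ζ u ≠ ζ v) ∧
      (∀ v, v ≠ z → (EA z v ∨ ∃ u w, EA u v ∧ EA w v ∧ u ≠ z ∧ w ≠ z ∧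
        ζ u < ζ v ∧ ζ v < ζ w)) ∧
      (∀ v, v ≠ z → v ≠ α → v ≠ β → ζ α < ζ v ∧ ζ v < ζ β) := by
  classical
  obtain ⟨hflat, ⟨hSTb, hSTr, hdiv⟩, hparc⟩ := hinv
  set S : Finset V := Finset.univ.erase z with hS
  have memS : ∀ u : V, u ≠ z → u ∈ S := fun u h =>
    Finset.mem_erase.2 ⟨h, Finset.mem_univ u⟩
  have H : Hyp S z α β b r := by
    refine ⟨Finset.notMem_erase z _, memS α hαz', memS β hβz', hαβ,
      hα (b α) (hSTb.1 α (hall α) hαz'), hα (r α) (hSTr.1 α (hall α) hαz'),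
      hβ (b β) (hSTb.1 β (hall β) hβz'), hβ (r β) (hSTr.1 β (hall β) hβz'),
      ?_, ?_, ?_, ?_, ?_, ?_⟩
    · intro u hu
      by_cases h : b u = z
      · exact Or.inl h
      · exact Or.inr (memS _ h)
    · intro u hu
      by_cases h : r u = z
      · exact Or.inl h
      · exact Or.inr (memS _ h)
    · intro u hu
      exact hparc u (hall u) (Finset.mem_erase.1 hu).1
    · intro u hu
      obtain ⟨p, hp⟩ := hSTb.2 u (hall u)
      exact walk_to_upchain hp ⟨[z], UpChain.root⟩
    · intro u hu
      obtain ⟨p, hp⟩ := hSTr.2 u (hall u)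
      exact walk_to_upchain hp ⟨[z], UpChain.root⟩
    · intro u hu p q hp hq x hxp hxq
      have huz : u ≠ z := (Finset.mem_erase.1 hu).1
      obtain ⟨P, hP, hPm⟩ := upchain_to_walk hall hp
      obtain ⟨Q, hQ, hQm⟩ := upchain_to_walk hall hq
      have hdom := hdiv u P Q (hall u) hP hQ x ((hPm x).2 hxp) ((hQm x).2 hxq)
      exact (hflat u (hall u) huz x hdom).symm
  obtain ⟨ζq, hC⟩ := core S.card S b r le_rfl H
  set ζ₂ : V → ℚ := fun u => if u = z then ζq β + 1 else ζq u with hζ₂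
  have v2 : ∀ u, u ≠ z → ζ₂ u = ζq u := fun u h => by simp [hζ₂, h]
  have v2z : ζ₂ z = ζq β + 1 := by simp [hζ₂]
  have hβub : ∀ u, u ≠ z → ζ₂ u ≤ ζq β := fun u h => by
    rw [v2 u h]; exact (hC.2.2.2 u (memS u h)).2
  have inj2 : ∀ a b : V, a ≠ b → ζ₂ a ≠ ζ₂ b := by
    intro a b hab
    by_cases ha : a = z <;> by_cases hb : b = z
    · exact absurd (ha.trans hb.symm) hab
    · subst ha; rw [v2z]
      have := hβub b hb
      intro heq; rw [← heq] at this; linarith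
    · subst hb; rw [v2z]
      have := hβub a ha
      intro heq; rw [heq] at this; linarith
    · rw [v2 a ha, v2 b hb]
      exact fun heq => hab (hC.1 (memS a ha) (memS b hb) heq)
  set N : V → ℕ := fun u => (Finset.univ.filter (fun w => ζ₂ w < ζ₂ u)).card with hN
  have mono : ∀ a b : V, ζ₂ a < ζ₂ b → N a < N b := by
    intro a b hab
    apply Finset.card_lt_card
    rw [Finset.ssubset_def]
    constructor
    · intro w hw
      rw [Finset.mem_filter] at hw ⊢
      exact ⟨hw.1, hw.2.trans hab⟩
    · intro hsub
      have h1 : a ∈ Finset.univ.filter (fun w => ζ₂ w < ζ₂ b) :=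
        Finset.mem_filter.2 ⟨Finset.mem_univ a, hab⟩
      have h2 := hsub h1
      rw [Finset.mem_filter] at h2
      exact lt_irrefl _ h2.2
  refine ⟨N, ?_, ?_, ?_⟩
  · intro u v huv
    rcases (inj2 u v huv).lt_or_gt with h | h
    · exact (mono u v h).ne
    · exact (mono v u h).ne'
  · intro u huz
    by_cases hb : b u = z
    · left
      have := hSTb.1 u (hall u) huz
      rwa [hb] at this
    · right
      have hru : r u ≠ z := ((hparc u (hall u) huz).resolve_left (fun h => hb h.1)).2.1
      have hbtw := hC.2.1 u (memS u huz) hb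
      have eb : ζ₂ (b u) = ζq (b u) := v2 _ hb
      have er : ζ₂ (r u) = ζq (r u) := v2 _ hru
      have eu : ζ₂ u = ζq u := v2 _ huz
      rcases hbtw with ⟨a1, a2⟩ | ⟨a1, a2⟩
      · exact ⟨b u, r u, hSTb.1 u (hall u) huz, hSTr.1 u (hall u) huz, hb, hru,
          mono _ _ (by rw [eb, eu]; exact a1), mono _ _ (by rw [eu, er]; exact a2)⟩
      · exact ⟨r u, b u, hSTr.1 u (hall u) huz, hSTb.1 u (hall u) huz, hru, hb,
          mono _ _ (by rw [er, eu]; exact a1), mono _ _ (by rw [eu, eb]; exact a2)⟩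
  · intro u huz h1 h2
    obtain ⟨k1, k2⟩ := hC.2.2.1 u (memS u huz) h1 h2
    exact ⟨mono _ _ (by rw [v2 α hαz', v2 u huz]; exact k1),
      mono _ _ (by rw [v2 u huz, v2 β hβz']; exact k2)⟩


end Dominators
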